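/- Let n, i, j be integers with i ≥ j ≥ 0, i + j ≤ n and i + j ≡ n (mod 2), and let δ_i be the remainder of i modulo 2. Then the number of pairs (P,Q) of lattice paths of length n satisfying Q ≤ P, h(P) = j + δ_i, h(Q) = −j + δ_i, and min over 0 ≤ a ≤ n of (h_a(P) + h_a(Q))/2 equal to −⌊i/2⌋, equals the number of walks of length n constrained to the upper half-plane (all positions satisfy y ≥ 0) that end at the point (δ_i, j) and whose minimum x-coordinate over all positions equals −⌊i/2⌋. -/

import Mathlib

/-- A lattice path of length `n`: each step is `+1` (U) or `-1` (D). -/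
def IsPath {n : ℕ} (P : Fin n → ℤ) : Prop := ∀ l, P l = 1 ∨ P l = -1

/-- Height of the path `P` at `x = a`: sum of the first `a` steps. -/
def ht {n : ℕ} (P : Fin n → ℤ) (a : ℕ) : ℤ :=
  ∑ l ∈ Finset.univ.filter (fun l : Fin n => (l : ℕ) < a), P l

/-- The lowest height of the agreement path `(P+Q)/2`, over `0 ≤ a ≤ n`. -/
def agreeMin {n : ℕ} (P Q : Fin n → ℤ) : ℤ :=
  (Finset.range (n + 1)).inf' Finset.nonempty_range_add_one
    (fun a => (ht P a + ht Q a) / 2)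

/-- A walk of length `n` with unit steps N, S, E, W. -/
def IsWalk {n : ℕ} (w : Fin n → ℤ × ℤ) : Prop :=
  ∀ l, w l = (0, 1) ∨ w l = (0, -1) ∨ w l = (1, 0) ∨ w l = (-1, 0)

/-- Position of the walk `w` after `a` steps. -/
def pos {n : ℕ} (w : Fin n → ℤ × ℤ) (a : ℕ) : ℤ × ℤ :=
  ∑ l ∈ Finset.univ.filter (fun l : Fin n => (l : ℕ) < a), w l

/-- The minimum x-coordinate of a walk over `0 ≤ a ≤ n`. -/
def minX {n : ℕ} (w : Fin n → ℤ × ℤ) : ℤ :=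
  (Finset.range (n + 1)).inf' Finset.nonempty_range_add_one (fun a => (pos w a).1)

def toWalk {n : ℕ} (P Q : Fin n → ℤ) : Fin n → ℤ × ℤ :=
  fun l => ((P l + Q l) / 2, (P l - Q l) / 2)

def toP {n : ℕ} (w : Fin n → ℤ × ℤ) : Fin n → ℤ := fun l => (w l).1 + (w l).2
def toQ {n : ℕ} (w : Fin n → ℤ × ℤ) : Fin n → ℤ := fun l => (w l).1 - (w l).2

lemma posX {n : ℕ} (w : Fin n → ℤ × ℤ) (a : ℕ) :
    (pos w a).1 = ∑ l ∈ Finset.univ.filter (fun l : Fin n => (l : ℕ) < a), (w l).1 := by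
  rw [pos, Prod.fst_sum]

lemma posY {n : ℕ} (w : Fin n → ℤ × ℤ) (a : ℕ) :
    (pos w a).2 = ∑ l ∈ Finset.univ.filter (fun l : Fin n => (l : ℕ) < a), (w l).2 := by
  rw [pos, Prod.snd_sum]

lemma ht_toP {n : ℕ} (w : Fin n → ℤ × ℤ) (a : ℕ) :
    ht (toP w) a = (pos w a).1 + (pos w a).2 := by
  rw [posX, posY, ht, ← Finset.sum_add_distrib]; rfl

lemma ht_toQ {n : ℕ} (w : Fin n → ℤ × ℤ) (a : ℕ) :
    ht (toQ w) a = (pos w a).1 - (pos w a).2 := by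
  rw [posX, posY, ht, ← Finset.sum_sub_distrib]; rfl

lemma two_posX {n : ℕ} (P Q : Fin n → ℤ) (hP : IsPath P) (hQ : IsPath Q) (a : ℕ) :
    2 * (pos (toWalk P Q) a).1 = ht P a + ht Q a := by
  rw [posX, ht, ht, Finset.mul_sum, ← Finset.sum_add_distrib]
  refine Finset.sum_congr rfl fun l _ => ?_
  show 2 * ((P l + Q l) / 2) = P l + Q l
  rcases hP l with h | h <;> rcases hQ l with h' | h' <;> rw [h, h'] <;> decide

lemma two_posY {n : ℕ} (P Q : Fin n → ℤ) (hP : IsPath P) (hQ : IsPath Q) (a : ℕ) :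
    2 * (pos (toWalk P Q) a).2 = ht P a - ht Q a := by
  rw [posY, ht, ht, Finset.mul_sum, ← Finset.sum_sub_distrib]
  refine Finset.sum_congr rfl fun l _ => ?_
  show 2 * ((P l - Q l) / 2) = P l - Q l
  rcases hP l with h | h <;> rcases hQ l with h' | h' <;> rw [h, h'] <;> decide

lemma isWalk_toWalk {n : ℕ} (P Q : Fin n → ℤ) (hP : IsPath P) (hQ : IsPath Q) :
    IsWalk (toWalk P Q) := by
  intro l
  simp only [toWalk]
  rcases hP l with h | h <;> rcases hQ l with h' | h' <;> rw [h, h'] <;> decide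

lemma isPath_toP {n : ℕ} (w : Fin n → ℤ × ℤ) (hw : IsWalk w) : IsPath (toP w) := by
  intro l
  show (w l).1 + (w l).2 = 1 ∨ (w l).1 + (w l).2 = -1
  rcases hw l with h | h | h | h <;> rw [h] <;> decide

lemma isPath_toQ {n : ℕ} (w : Fin n → ℤ × ℤ) (hw : IsWalk w) : IsPath (toQ w) := by
  intro l
  show (w l).1 - (w l).2 = 1 ∨ (w l).1 - (w l).2 = -1
  rcases hw l with h | h | h | h <;> rw [h] <;> decide

lemma minX_toWalk {n : ℕ} (P Q : Fin n → ℤ) (hP : IsPath P) (hQ : IsPath Q) :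
    minX (toWalk P Q) = agreeMin P Q := by
  rw [minX, agreeMin]
  refine Finset.inf'_congr _ rfl fun a _ => ?_
  have := two_posX P Q hP hQ a
  omega

lemma agreeMin_to {n : ℕ} (w : Fin n → ℤ × ℤ) :
    agreeMin (toP w) (toQ w) = minX w := by
  rw [minX, agreeMin]
  refine Finset.inf'_congr _ rfl fun a _ => ?_
  rw [ht_toP, ht_toQ]
  omega

lemma toP_toWalk {n : ℕ} (P Q : Fin n → ℤ) (hP : IsPath P) (hQ : IsPath Q) :
    toP (toWalk P Q) = P := by
  funext l
  show (P l + Q l) / 2 + (P l - Q l) / 2 = P l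
  rcases hP l with h | h <;> rcases hQ l with h' | h' <;> rw [h, h'] <;> decide

lemma toQ_toWalk {n : ℕ} (P Q : Fin n → ℤ) (hP : IsPath P) (hQ : IsPath Q) :
    toQ (toWalk P Q) = Q := by
  funext l
  show (P l + Q l) / 2 - (P l - Q l) / 2 = Q l
  rcases hP l with h | h <;> rcases hQ l with h' | h' <;> rw [h, h'] <;> decide

lemma toWalk_to {n : ℕ} (w : Fin n → ℤ × ℤ) (hw : IsWalk w) :
    toWalk (toP w) (toQ w) = w := by
  funext l
  show (((w l).1 + (w l).2 + ((w l).1 - (w l).2)) / 2,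
        ((w l).1 + (w l).2 - ((w l).1 - (w l).2)) / 2) = w l
  rcases hw l with h | h | h | h <;> rw [h] <;> decide

theorem stmt9 (n : ℕ) (i j : ℤ) (hj : 0 ≤ j) (hij : j ≤ i) (hn : i + j ≤ (n : ℤ))
    (hpar : (i + j) % 2 = (n : ℤ) % 2) :
    Nat.card {PQ : (Fin n → ℤ) × (Fin n → ℤ) //
      IsPath PQ.1 ∧ IsPath PQ.2 ∧
      (∀ a ≤ n, ht PQ.2 a ≤ ht PQ.1 a) ∧
      ht PQ.1 n = j + i % 2 ∧ ht PQ.2 n = -j + i % 2 ∧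
      agreeMin PQ.1 PQ.2 = -(i / 2)} =
    Nat.card {w : Fin n → ℤ × ℤ //
      IsWalk w ∧ (∀ a ≤ n, 0 ≤ (pos w a).2) ∧ pos w n = (i % 2, j) ∧ minX w = -(i / 2)} := by
  apply Nat.card_congr
  refine ⟨fun PQ => ⟨toWalk PQ.1.1 PQ.1.2, ?_⟩, fun w => ⟨(toP w.1, toQ w.1), ?_⟩, ?_, ?_⟩
  · obtain ⟨⟨P, Q⟩, hP, hQ, hle, hPn, hQn, hmin⟩ := PQ
    replace hP : IsPath P := hP
    replace hQ : IsPath Q := hQ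
    replace hle : ∀ a ≤ n, ht Q a ≤ ht P a := hle
    replace hPn : ht P n = j + i % 2 := hPn
    replace hQn : ht Q n = -j + i % 2 := hQn
    replace hmin : agreeMin P Q = -(i / 2) := hmin
    refine ⟨isWalk_toWalk P Q hP hQ, ?_, ?_, ?_⟩
    · intro a ha
      show 0 ≤ (pos (toWalk P Q) a).2
      have := two_posY P Q hP hQ a
      have := hle a ha
      omega
    · show pos (toWalk P Q) n = (i % 2, j)
      have hx := two_posX P Q hP hQ n
      have hy := two_posY P Q hP hQ n
      exact Prod.ext (by omega) (by omega)
    · show minX (toWalk P Q) = -(i / 2)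
      rw [minX_toWalk P Q hP hQ, hmin]
  · obtain ⟨w, hw, hy, hwn, hmin⟩ := w
    have h1 : (pos w n).1 = i % 2 := by rw [hwn]
    have h2 : (pos w n).2 = j := by rw [hwn]
    refine ⟨isPath_toP w hw, isPath_toQ w hw, ?_, ?_, ?_, ?_⟩
    · intro a ha
      show ht (toQ w) a ≤ ht (toP w) a
      rw [ht_toP, ht_toQ]
      have := hy a ha
      omega
    · show ht (toP w) n = j + i % 2
      rw [ht_toP]; omega
    · show ht (toQ w) n = -j + i % 2
      rw [ht_toQ]; omega
    · show agreeMin (toP w) (toQ w) = -(i / 2)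
      rw [agreeMin_to, hmin]
  · rintro ⟨⟨P, Q⟩, hP, hQ, -⟩
    replace hP : IsPath P := hP
    replace hQ : IsPath Q := hQ
    exact Subtype.ext (Prod.ext (toP_toWalk P Q hP hQ) (toQ_toWalk P Q hP hQ))
  · rintro ⟨w, hw, -⟩
    exact Subtype.ext (toWalk_to w hw)
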